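/- The operator e_n is an idempotent: e_n ∘ e_n = e_n, i.e. for every f ∈ P, x_1^{n-1}⋯x_{n-1}·∂(n)( x_1^{n-1}⋯x_{n-1}·∂(n)(f) ) = x_1^{n-1}⋯x_{n-1}·∂(n)(f). -/

import Mathlib

noncomputable section

open MvPolynomial

/-- The reduced word (s_1)(s_2 s_1)(s_3 s_2 s_1)⋯(s_{n-1}⋯s_1) of the longest element of
the symmetric group S_n, written 0-indexed (the simple transposition s_{k+1} corresponds
to the index k). -/
def nilWord (n : ℕ) : List ℕ :=
  (List.range (n - 1)).flatMap fun t => (List.range (t + 1)).reverse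

/-- The composite ∂(n) = ∂_{i_1} ∘ ⋯ ∘ ∂_{i_N} of the divided difference operators D
along the reduced word (s_1)(s_2 s_1)⋯(s_{n-1}⋯s_1) of the longest element of S_n. -/
def longOp {n : ℕ} (D : ℕ → MvPolynomial (Fin n) ℤ →ₗ[ℤ] MvPolynomial (Fin n) ℤ) :
    MvPolynomial (Fin n) ℤ →ₗ[ℤ] MvPolynomial (Fin n) ℤ :=
  (nilWord n).foldr (fun k acc => (D k).comp acc) LinearMap.id

/-- The staircase monomial x_1^{n-1} x_2^{n-2} ⋯ x_{n-1} (variables 0-indexed). -/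
def staircase (n : ℕ) : MvPolynomial (Fin n) ℤ :=
  ∏ i : Fin n, X i ^ (n - 1 - (i : ℕ))

/-- D k is, for each k with k+1 ≤ n-1 (0-indexed: k+1 < n), the divided difference
operator ∂_{k+1}, uniquely determined by (x_{k+1} - x_{k+2})·∂_{k+1}(f) = f - s_{k+1}(f). -/
def IsDDiff {n : ℕ} (D : ℕ → MvPolynomial (Fin n) ℤ →ₗ[ℤ] MvPolynomial (Fin n) ℤ) : Prop :=
  ∀ (k : ℕ) (hk : k + 1 < n) (f : MvPolynomial (Fin n) ℤ),
    (X (⟨k, Nat.lt_of_succ_lt hk⟩ : Fin n) - X ⟨k + 1, hk⟩) * D k f =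
      f - rename (Equiv.swap (⟨k, Nat.lt_of_succ_lt hk⟩ : Fin n) ⟨k + 1, hk⟩) f

namespace DDaux

lemma swap_comm_fun {α} [DecidableEq α] {a b c d : α} (h1 : a ≠ c) (h2 : a ≠ d) (h3 : b ≠ c) (h4 : b ≠ d) :
    ⇑(Equiv.swap a b) ∘ ⇑(Equiv.swap c d) = ⇑(Equiv.swap c d) ∘ ⇑(Equiv.swap a b) := by
  funext x
  simp only [Function.comp_apply]
  by_cases hxa : x = a
  · subst hxa
    simp [Equiv.swap_apply_of_ne_of_ne, h1, h2, h3, h4, Ne.symm h1, Ne.symm h2, Ne.symm h3, Ne.symm h4]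
  by_cases hxb : x = b
  · subst hxb
    simp [Equiv.swap_apply_of_ne_of_ne, h1, h2, h3, h4, Ne.symm h1, Ne.symm h2, Ne.symm h3, Ne.symm h4]
  by_cases hxc : x = c
  · subst hxc
    simp [Equiv.swap_apply_of_ne_of_ne, h1, h2, h3, h4, Ne.symm h1, Ne.symm h2, Ne.symm h3, Ne.symm h4]
  by_cases hxd : x = d
  · subst hxd
    simp [Equiv.swap_apply_of_ne_of_ne, h1, h2, h3, h4, Ne.symm h1, Ne.symm h2, Ne.symm h3, Ne.symm h4]
  · simp [Equiv.swap_apply_of_ne_of_ne, hxa, hxb, hxc, hxd]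

lemma swap_braid_fun {α} [DecidableEq α] {a b c : α} (h1 : a ≠ b) (h2 : b ≠ c) (h3 : a ≠ c) :
    ⇑(Equiv.swap a b) ∘ ⇑(Equiv.swap b c) ∘ ⇑(Equiv.swap a b) =
      ⇑(Equiv.swap b c) ∘ ⇑(Equiv.swap a b) ∘ ⇑(Equiv.swap b c) := by
  funext x
  simp only [Function.comp_apply]
  by_cases hxa : x = a
  · subst hxa
    simp [Equiv.swap_apply_of_ne_of_ne, h1, h2, h3, Ne.symm h1, Ne.symm h2, Ne.symm h3]
  by_cases hxb : x = b
  · subst hxb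
    simp [Equiv.swap_apply_of_ne_of_ne, h1, h2, h3, Ne.symm h1, Ne.symm h2, Ne.symm h3]
  by_cases hxc : x = c
  · subst hxc
    simp [Equiv.swap_apply_of_ne_of_ne, h1, h2, h3, Ne.symm h1, Ne.symm h2, Ne.symm h3]
  · simp [Equiv.swap_apply_of_ne_of_ne, hxa, hxb, hxc]

variable {n : ℕ}

lemma ren_ren (a b : Fin n) (p : MvPolynomial (Fin n) ℤ) :
    rename (Equiv.swap a b) (rename (Equiv.swap a b) p) = p := by
  rw [rename_rename]
  have : (⇑(Equiv.swap a b) ∘ ⇑(Equiv.swap a b)) = id := by funext x; simp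
  rw [this, rename_id, AlgHom.id_apply]

lemma cancelX {a b : Fin n} (hab : a ≠ b) {p q : MvPolynomial (Fin n) ℤ}
    (h : (X a - X b) * p = (X a - X b) * q) : p = q :=
  mul_left_cancel₀ (sub_ne_zero.mpr fun he => hab (MvPolynomial.X_injective he)) h

variable (D : ℕ → MvPolynomial (Fin n) ℤ →ₗ[ℤ] MvPolynomial (Fin n) ℤ)

/-- the swap s_k as a permutation -/
abbrev sk (k : ℕ) (hk : k + 1 < n) : Equiv.Perm (Fin n) :=
  Equiv.swap (⟨k, Nat.lt_of_succ_lt hk⟩ : Fin n) ⟨k + 1, hk⟩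

/-- F1 : image of D k is s_k-invariant -/
lemma ren_D_self (hD : IsDDiff D) (k : ℕ) (hk : k + 1 < n) (f : MvPolynomial (Fin n) ℤ) :
    rename (sk k hk) (D k f) = D k f := by
  have h := hD k hk f
  have h2 := congrArg (rename (sk k hk)) h
  rw [map_mul, map_sub, map_sub] at h2
  rw [show (rename (sk k hk)) (X (⟨k, Nat.lt_of_succ_lt hk⟩ : Fin n)) = X ⟨k+1, hk⟩ by
        rw [rename_X]; exact congrArg _ (Equiv.swap_apply_left _ _),
      show (rename (sk k hk)) (X (⟨k+1, hk⟩ : Fin n)) = X ⟨k, Nat.lt_of_succ_lt hk⟩ by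
        rw [rename_X]; exact congrArg _ (Equiv.swap_apply_right _ _),
      ren_ren] at h2
  apply cancelX (a := (⟨k, Nat.lt_of_succ_lt hk⟩ : Fin n)) (b := ⟨k+1, hk⟩)
    (by simp [Fin.ext_iff])
  rw [h]
  linear_combination -h2

/-- F2 pointwise -/
lemma D_D_self (hD : IsDDiff D) (k : ℕ) (hk : k + 1 < n) (f : MvPolynomial (Fin n) ℤ) :
    D k (D k f) = 0 := by
  apply cancelX (a := (⟨k, Nat.lt_of_succ_lt hk⟩ : Fin n)) (b := ⟨k+1, hk⟩)
    (by simp [Fin.ext_iff])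
  rw [hD k hk (D k f), ren_D_self D hD k hk f]
  ring

/-- commutation of a disjoint swap with D j -/
lemma ren_D (hD : IsDDiff D) (i j : ℕ) (hi : i + 1 < n) (hj : j + 1 < n)
    (hdisj : i + 2 ≤ j ∨ j + 2 ≤ i) (f : MvPolynomial (Fin n) ℤ) :
    rename (sk i hi) (D j f) = D j (rename (sk i hi) f) := by
  have hne : (⟨j, Nat.lt_of_succ_lt hj⟩ : Fin n) ≠ ⟨j+1, hj⟩ := by simp [Fin.ext_iff]
  apply cancelX hne
  have h := congrArg (rename (sk i hi)) (hD j hj f)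
  rw [map_mul, map_sub, map_sub, rename_X, rename_X,
      Equiv.swap_apply_of_ne_of_ne (by simp [Fin.ext_iff]; omega) (by simp [Fin.ext_iff]; omega),
      Equiv.swap_apply_of_ne_of_ne (by simp [Fin.ext_iff]; omega) (by simp [Fin.ext_iff]; omega),
      rename_rename] at h
  rw [hD j hj (rename (sk i hi) f), h, rename_rename,
    swap_comm_fun (a := (⟨i, Nat.lt_of_succ_lt hi⟩ : Fin n)) (b := ⟨i+1, hi⟩)
      (c := (⟨j, Nat.lt_of_succ_lt hj⟩ : Fin n)) (d := ⟨j+1, hj⟩)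
      (by simp [Fin.ext_iff]; omega) (by simp [Fin.ext_iff]; omega)
      (by simp [Fin.ext_iff]; omega) (by simp [Fin.ext_iff]; omega)]

/-- F4 : commutation -/
lemma D_comm (hD : IsDDiff D) (i j : ℕ) (hi : i + 1 < n) (hj : j + 1 < n)
    (hdisj : i + 2 ≤ j ∨ j + 2 ≤ i) (f : MvPolynomial (Fin n) ℤ) :
    D i (D j f) = D j (D i f) := by
  have hnei : (⟨i, Nat.lt_of_succ_lt hi⟩ : Fin n) ≠ ⟨i+1, hi⟩ := by simp [Fin.ext_iff]
  have hnej : (⟨j, Nat.lt_of_succ_lt hj⟩ : Fin n) ≠ ⟨j+1, hj⟩ := by simp [Fin.ext_iff]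
  apply cancelX hnej
  apply cancelX hnei
  have ha := hD i hi (D j f)
  rw [ren_D D hD i j hi hj hdisj] at ha
  have hb := hD j hj f
  have hc := hD j hj (rename (sk i hi) f)
  have ha' := hD j hj (D i f)
  rw [ren_D D hD j i hj hi hdisj.symm] at ha'
  have hb' := hD i hi f
  have hc' := hD i hi (rename (sk j hj) f)
  have hcm : rename (sk i hi) (rename (sk j hj) f) = rename (sk j hj) (rename (sk i hi) f) := by
    rw [rename_rename, rename_rename,
      swap_comm_fun (by simp [Fin.ext_iff]; omega) (by simp [Fin.ext_iff]; omega)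
        (by simp [Fin.ext_iff]; omega) (by simp [Fin.ext_iff]; omega)]
  linear_combination (X (⟨j, Nat.lt_of_succ_lt hj⟩ : Fin n) - X ⟨j+1, hj⟩) * ha + hb - hc
    - (X (⟨i, Nat.lt_of_succ_lt hi⟩ : Fin n) - X ⟨i+1, hi⟩) * ha' - hb' + hc' - hcm

lemma ren_linear (a b x y : Fin n) (p q r : MvPolynomial (Fin n) ℤ)
    (h : (X x - X y) * p = q - r) :
    (X (Equiv.swap a b x) - X (Equiv.swap a b y)) * rename (Equiv.swap a b) p =
      rename (Equiv.swap a b) q - rename (Equiv.swap a b) r := by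
  have h2 := congrArg (rename (Equiv.swap a b)) h
  simpa only [map_mul, map_sub, rename_X] using h2

/-- F5 : braid relation -/
lemma D_braid (hD : IsDDiff D) (i : ℕ) (hi2 : i + 2 < n) (f : MvPolynomial (Fin n) ℤ) :
    D i (D (i+1) (D i f)) = D (i+1) (D i (D (i+1) f)) := by
  have hi1 : i + 1 < n := Nat.lt_of_succ_lt hi2
  set A : Fin n := ⟨i, Nat.lt_of_succ_lt hi1⟩ with hAdef
  set B : Fin n := ⟨i+1, hi1⟩ with hBdef
  set C : Fin n := ⟨i+2, hi2⟩ with hCdef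
  have hABne : A ≠ B := by simp [hAdef, hBdef, Fin.ext_iff]
  have hBCne : B ≠ C := by simp [hBdef, hCdef, Fin.ext_iff]
  have hACne : A ≠ C := by simp [hAdef, hCdef, Fin.ext_iff]
  have eAB_A : Equiv.swap A B A = B := Equiv.swap_apply_left _ _
  have eAB_B : Equiv.swap A B B = A := Equiv.swap_apply_right _ _
  have eAB_C : Equiv.swap A B C = C :=
    Equiv.swap_apply_of_ne_of_ne (Ne.symm hACne) (Ne.symm hBCne)
  have eBC_A : Equiv.swap B C A = A :=
    Equiv.swap_apply_of_ne_of_ne hABne hACne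
  have eBC_B : Equiv.swap B C B = C := Equiv.swap_apply_left _ _
  have eBC_C : Equiv.swap B C C = B := Equiv.swap_apply_right _ _
  have h1 : (X A - X B) * D i f = f - rename (Equiv.swap A B) f := hD i hi1 f
  have h1' : (X B - X C) * D (i+1) f = f - rename (Equiv.swap B C) f := hD (i+1) hi2 f
  have h2 : (X B - X C) * D (i+1) (D i f) = D i f - rename (Equiv.swap B C) (D i f) :=
    hD (i+1) hi2 _
  have h2' : (X A - X B) * D i (D (i+1) f) = D (i+1) f - rename (Equiv.swap A B) (D (i+1) f) :=
    hD i hi1 _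
  have h3 : (X A - X B) * D i (D (i+1) (D i f)) =
      D (i+1) (D i f) - rename (Equiv.swap A B) (D (i+1) (D i f)) := hD i hi1 _
  have h3' : (X B - X C) * D (i+1) (D i (D (i+1) f)) =
      D i (D (i+1) f) - rename (Equiv.swap B C) (D i (D (i+1) f)) :=
    hD (i+1) hi2 _
  have hs1v := ren_linear A B B C _ _ _ h2
  rw [eAB_B, eAB_C] at hs1v
  have hs2u := ren_linear B C A B _ _ _ h1
  rw [eBC_A, eBC_B] at hs2u
  have hs1s2u := ren_linear A B A C _ _ _ hs2u
  rw [eAB_A, eAB_C] at hs1s2u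
  have hinv1 : rename (Equiv.swap A B) (D i f) = D i f := ren_D_self D hD i hi1 f
  have hs2v' := ren_linear B C A B _ _ _ h2'
  rw [eBC_A, eBC_B] at hs2v'
  have hs1u' := ren_linear A B B C _ _ _ h1'
  rw [eAB_B, eAB_C] at hs1u'
  have hs2s1u' := ren_linear B C A C _ _ _ hs1u'
  rw [eBC_A, eBC_C] at hs2s1u'
  have hinv1b : rename (Equiv.swap B C) (D (i+1) f) = D (i+1) f := ren_D_self D hD (i+1) hi2 f
  have hbr : rename (Equiv.swap A B) (rename (Equiv.swap B C) (rename (Equiv.swap A B) f)) =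
      rename (Equiv.swap B C) (rename (Equiv.swap A B) (rename (Equiv.swap B C) f)) := by
    simp only [rename_rename]
    rw [swap_braid_fun hABne hBCne hACne]
  apply cancelX hACne
  apply cancelX hBCne
  apply cancelX hABne
  linear_combination (X B - X C)*(X A - X C)*h3 + (X A - X C)*h2 - (X B - X C)*hs1v
    - (X B - X C)*hinv1 + h1 - hs2u + hs1s2u
    - ((X A - X B)*(X A - X C)*h3' + (X A - X C)*h2' - (X A - X B)*hs2v'
      - (X A - X B)*hinv1b + h1' - hs1u' + hs2s1u') - hbr

/-- F3 : Leibniz with invariant right factor -/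
lemma D_mul_invariant (hD : IsDDiff D) (k : ℕ) (hk : k + 1 < n)
    (h g : MvPolynomial (Fin n) ℤ) (hg : rename (sk k hk) g = g) :
    D k (h * g) = D k h * g := by
  have hne : (⟨k, Nat.lt_of_succ_lt hk⟩ : Fin n) ≠ ⟨k+1, hk⟩ := by simp [Fin.ext_iff]
  apply cancelX hne
  rw [hD k hk (h*g), map_mul, hg]
  linear_combination (-g) * (hD k hk h)

/-- ascending block of operators : `blk b l = D (b+l-1) ∘ ⋯ ∘ D b` -/
def blk (b : ℕ) : ℕ → (MvPolynomial (Fin n) ℤ →ₗ[ℤ] MvPolynomial (Fin n) ℤ)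
  | 0 => LinearMap.id
  | l+1 => (D (b+l)).comp (blk b l)

lemma blk_succ (b l : ℕ) (f : MvPolynomial (Fin n) ℤ) :
    blk D b (l+1) f = D (b+l) (blk D b l f) := rfl

lemma blk_split (b l1 l2 : ℕ) (f : MvPolynomial (Fin n) ℤ) :
    blk D b (l1+l2) f = blk D (b+l1) l2 (blk D b l1 f) := by
  induction l2 with
  | zero => rfl
  | succ l2 ih =>
    show D (b+(l1+l2)) (blk D b (l1+l2) f) = D ((b+l1)+l2) (blk D (b+l1) l2 (blk D b l1 f))
    rw [ih, Nat.add_assoc]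

lemma D_blk_comm (hD : IsDDiff D) (i b l : ℕ) (hi : i + 1 < n) (hv : b + l < n)
    (hdisj : i + 2 ≤ b ∨ b + l + 1 ≤ i) (f : MvPolynomial (Fin n) ℤ) :
    D i (blk D b l f) = blk D b l (D i f) := by
  induction l with
  | zero => rfl
  | succ l ih =>
    rw [blk_succ, blk_succ, D_comm D hD i (b+l) hi (by omega) (by omega),
      ih (by omega) (by omega)]

/-- key shift relation : `D i ∘ B_a = B_a ∘ D (i+1)` for `i < a` -/
lemma D_shift (hD : IsDDiff D) (i a : ℕ) (hia : i + 1 ≤ a) (ha : a + 1 < n)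
    (f : MvPolynomial (Fin n) ℤ) :
    D i (blk D 0 (a+1) f) = blk D 0 (a+1) (D (i+1) f) := by
  have hsplit : ∀ g : MvPolynomial (Fin n) ℤ,
      blk D 0 (a+1) g = blk D (i+2) (a-1-i) (D (i+1) (D i (blk D 0 i g))) := by
    intro g
    have e1 : a + 1 = i + (2 + (a-1-i)) := by omega
    rw [show blk D 0 (a+1) g = blk D 0 (i + (2 + (a-1-i))) g by rw [← e1]]
    rw [blk_split D 0 i (2 + (a-1-i)), Nat.zero_add, blk_split D i 2 (a-1-i)]
    rfl
  rw [hsplit f, hsplit (D (i+1) f)]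
  rw [D_blk_comm D hD i (i+2) (a-1-i) (by omega) (by omega) (by omega)]
  rw [D_braid D hD i (by omega)]
  rw [D_blk_comm D hD (i+1) 0 i (by omega) (by omega) (by omega)]

/-- `B_{t-1} ∘ B_t = B_t ∘ (D t ∘ ⋯ ∘ D 1)` -/
lemma blk_shift (hD : IsDDiff D) (t : ℕ) (hv : t + 1 < n) (f : MvPolynomial (Fin n) ℤ) :
    blk D 0 t (blk D 0 (t+1) f) = blk D 0 (t+1) (blk D 1 t f) := by
  have key : ∀ l r : ℕ, r + l = t → ∀ g : MvPolynomial (Fin n) ℤ,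
      blk D r l (blk D 0 (t+1) g) = blk D 0 (t+1) (blk D (r+1) l g) := by
    intro l
    induction l with
    | zero => intro r _ g; rfl
    | succ l ih =>
      intro r hr g
      have h1 : ∀ (b : ℕ) (h : MvPolynomial (Fin n) ℤ),
          blk D b (l+1) h = blk D (b+1) l (D b h) := by
        intro b h
        rw [show l+1 = 1+l by omega, blk_split D b 1 l]
        rfl
      rw [h1, D_shift D hD r t (by omega) hv, ih (r+1) (by omega), h1]
  have := key t 0 (by omega) f
  simpa using this
/-- composite of blocks `B_t ∘ B_(t+1) ∘ ⋯ ∘ B_(t+c-1)` -/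
def bcF : ℕ → ℕ → (MvPolynomial (Fin n) ℤ →ₗ[ℤ] MvPolynomial (Fin n) ℤ)
  | _, 0 => LinearMap.id
  | t, c+1 => (blk D 0 (t+1)).comp (bcF (t+1) c)

lemma bcF_succ (t c : ℕ) (f : MvPolynomial (Fin n) ℤ) :
    bcF D t (c+1) f = blk D 0 (t+1) (bcF D (t+1) c f) := rfl

/-- `D k` kills the composite of blocks whenever block `k` occurs -/
lemma D_bcF (hD : IsDDiff D) (k t c : ℕ) (hk : k + 1 < n) (ht : t ≤ k) (hkc : k < t + c)
    (hv : t + c < n) (f : MvPolynomial (Fin n) ℤ) :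
    D k (bcF D t c f) = 0 := by
  induction c generalizing t f with
  | zero => omega
  | succ c ih =>
    rw [bcF_succ]
    rcases Nat.lt_or_ge t k with hlt | hge
    · rcases Nat.eq_or_lt_of_le (Nat.succ_le_of_lt hlt) with heq | hlt2
      · -- k = t + 1 : use the block shift to create a repeated letter
        obtain ⟨c', rfl⟩ : ∃ c', c = c' + 1 := ⟨c-1, by omega⟩
        rw [bcF_succ, blk_shift D hD (t+1) (by omega)]
        subst heq
        rw [show blk D 0 (t+1+1) (blk D 1 (t+1) (bcF D (t+1+1) c' f))
              = D (t+1) (blk D 0 (t+1) (blk D 1 (t+1) (bcF D (t+1+1) c' f))) by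
            rw [blk_succ, Nat.zero_add]]
        exact D_D_self D hD (t+1) hk _
      · -- k ≥ t + 2 : commute past the block
        rw [D_blk_comm D hD k 0 (t+1) hk (by omega) (by omega)]
        rw [ih (t+1) (by omega) (by omega) (by omega) f]
        exact map_zero _
    · -- t = k : repeated letter immediately
      have : t = k := le_antisymm (by omega) hge
      subst this
      rw [show blk D 0 (t+1) (bcF D (t+1) c f)
            = D t (blk D 0 t (bcF D (t+1) c f)) by rw [blk_succ, Nat.zero_add]]
      exact D_D_self D hD t hk _

/-- fold of the operators along a word -/
def Fop (l : List ℕ) : MvPolynomial (Fin n) ℤ →ₗ[ℤ] MvPolynomial (Fin n) ℤ :=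
  l.foldr (fun k acc => (D k).comp acc) LinearMap.id

lemma Fop_append (l1 l2 : List ℕ) : Fop D (l1 ++ l2) = (Fop D l1).comp (Fop D l2) := by
  induction l1 with
  | nil => simp [Fop]
  | cons a l1 ih =>
    show (D a).comp (Fop D (l1 ++ l2)) = ((D a).comp (Fop D l1)).comp (Fop D l2)
    rw [ih, LinearMap.comp_assoc]

lemma Fop_blockword (l : ℕ) : Fop D ((List.range l).reverse) = blk D 0 l := by
  induction l with
  | zero => rfl
  | succ l ih =>
    rw [List.range_succ, List.reverse_append]
    show (D l).comp (Fop D ((List.range l).reverse)) = blk D 0 (l+1)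
    rw [ih]
    show (D l).comp (blk D 0 l) = (D (0+l)).comp (blk D 0 l)
    rw [Nat.zero_add]

lemma Fop_flatMap (c t : ℕ) :
    Fop D ((List.range' t c).flatMap (fun s => (List.range (s+1)).reverse)) = bcF D t c := by
  induction c generalizing t with
  | zero => rfl
  | succ c ih =>
    rw [List.range'_succ, List.flatMap_cons, Fop_append, Fop_blockword, ih]
    rfl
lemma Fop_mul (hD : IsDDiff D) (l : List ℕ) (hval : ∀ k ∈ l, k + 1 < n)
    (g h : MvPolynomial (Fin n) ℤ)
    (hg : ∀ (k : ℕ) (hk : k + 1 < n), rename (sk k hk) g = g) :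
    Fop D l (h * g) = Fop D l h * g := by
  induction l with
  | nil => rfl
  | cons a l ih =>
    have ha : a + 1 < n := hval a (by simp)
    show D a (Fop D l (h * g)) = D a (Fop D l h) * g
    rw [ih (fun k hk => hval k (by simp [hk]))]
    exact D_mul_invariant D hD a ha _ g (hg a ha)

/-- partial staircase monomial -/
def stairc (m : ℕ) : MvPolynomial (Fin n) ℤ := ∏ i : Fin n, X i ^ (m - 1 - (i : ℕ))

/-- intermediate exponents in the staircase computation -/
def Ee (m j : ℕ) (i : Fin n) : ℕ :=
  if (i : ℕ) < j then m - 1 - i else if (i : ℕ) = j then m - j else m - i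

def Vv (m j : ℕ) : MvPolynomial (Fin n) ℤ := ∏ i : Fin n, X i ^ (Ee m j i)

lemma ren_prod (a b : Fin n) (E : Fin n → ℕ) :
    rename (Equiv.swap a b) ((∏ i : Fin n, X i ^ E i : MvPolynomial (Fin n) ℤ)) =
      (∏ i : Fin n, X i ^ (E (Equiv.swap a b i)) : MvPolynomial (Fin n) ℤ) := by
  rw [map_prod]
  simp only [map_pow, rename_X]
  calc (∏ i : Fin n, X (Equiv.swap a b i) ^ E i : MvPolynomial (Fin n) ℤ)
      = ∏ i : Fin n, (fun i : Fin n => X i ^ E (Equiv.swap a b i)) (Equiv.swap a b i) := by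
        apply Finset.prod_congr rfl
        intro i _
        simp [Equiv.swap_apply_self]
    _ = ∏ i : Fin n, X i ^ E (Equiv.swap a b i) :=
        Equiv.prod_comp (Equiv.swap a b) (fun i : Fin n => X i ^ E (Equiv.swap a b i))

lemma prod_split (a b : Fin n) (hab : a ≠ b) (E : Fin n → ℕ) :
    (∏ i : Fin n, X i ^ E i : MvPolynomial (Fin n) ℤ) =
      X a ^ E a * X b ^ E b * ∏ i ∈ (Finset.univ.erase a).erase b, X i ^ E i := by
  rw [← Finset.mul_prod_erase Finset.univ _ (Finset.mem_univ a),
      ← Finset.mul_prod_erase (Finset.univ.erase a) _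
        (Finset.mem_erase.mpr ⟨Ne.symm hab, Finset.mem_univ b⟩), mul_assoc]

lemma stair_step (hD : IsDDiff D) (m j : ℕ) (hj : j + 1 ≤ m) (hjn : j + 1 < n) :
    D j (Vv m j) = Vv m (j+1) := by
  set A : Fin n := ⟨j, Nat.lt_of_succ_lt hjn⟩ with hA
  set B : Fin n := ⟨j+1, hjn⟩ with hB
  have hAB : A ≠ B := by simp [hA, hB, Fin.ext_iff]
  have hne : (⟨j, Nat.lt_of_succ_lt hjn⟩ : Fin n) ≠ ⟨j+1, hjn⟩ := hAB
  apply cancelX hne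
  rw [hD j hjn (Vv m j)]
  -- evaluate the exponents
  have eA : Ee m j A = (m - (j+1)) + 1 := by simp [Ee, hA] <;> omega
  have eB : Ee m j B = m - (j+1) := by simp [Ee, hB] <;> omega
  have eA' : Ee m (j+1) A = m - (j+1) := by simp [Ee, hA] <;> omega
  have eB' : Ee m (j+1) B = m - (j+1) := by simp [Ee, hB] <;> omega
  have hswapA : Equiv.swap A B A = B := Equiv.swap_apply_left _ _
  have hswapB : Equiv.swap A B B = A := Equiv.swap_apply_right _ _
  rw [show Vv m j = ∏ i : Fin n, X i ^ (Ee m j i) from rfl, ren_prod A B (Ee m j),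
      prod_split A B hAB (Ee m j), prod_split A B hAB (fun i => Ee m j (Equiv.swap A B i)),
      show Vv m (j+1) = ∏ i : Fin n, X i ^ (Ee m (j+1) i) from rfl,
      prod_split A B hAB (Ee m (j+1))]
  have hR1 : (∏ i ∈ (Finset.univ.erase A).erase B, X i ^ (Ee m j (Equiv.swap A B i))
        : MvPolynomial (Fin n) ℤ)
      = ∏ i ∈ (Finset.univ.erase A).erase B, X i ^ (Ee m j i) := by
    apply Finset.prod_congr rfl
    intro i hi
    rw [Finset.mem_erase, Finset.mem_erase] at hi
    rw [Equiv.swap_apply_of_ne_of_ne hi.2.1 hi.1]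
  have hR2 : (∏ i ∈ (Finset.univ.erase A).erase B, X i ^ (Ee m (j+1) i)
        : MvPolynomial (Fin n) ℤ)
      = ∏ i ∈ (Finset.univ.erase A).erase B, X i ^ (Ee m j i) := by
    apply Finset.prod_congr rfl
    intro i hi
    rw [Finset.mem_erase, Finset.mem_erase] at hi
    have h1 : (i : ℕ) ≠ j := by
      intro h; exact hi.2.1 (by simp [hA, Fin.ext_iff, h])
    have h2 : (i : ℕ) ≠ j + 1 := by
      intro h; exact hi.1 (by simp [hB, Fin.ext_iff, h])
    congr 1
    simp only [Ee]
    rcases Nat.lt_trichotomy (i : ℕ) j with h | h | h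
    · rw [if_pos h, if_pos (by omega)]
    · omega
    · rw [if_neg (by omega), if_neg (by omega), if_neg (by omega), if_neg (by omega)]
  rw [hR1, hR2, hswapA, hswapB, eA, eB, eA', eB']
  ring

lemma Vv_zero (m : ℕ) : (Vv m 0 : MvPolynomial (Fin n) ℤ) = stairc (m+1) := by
  apply Finset.prod_congr rfl
  intro i _
  congr 1
  simp only [Ee]
  rcases Nat.eq_or_lt_of_le (Nat.zero_le (i:ℕ)) with h | h
  · rw [if_neg (by omega), if_pos (by omega)]; omega
  · rw [if_neg (by omega), if_neg (by omega)]; omega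

lemma Vv_last (m : ℕ) : (Vv m m : MvPolynomial (Fin n) ℤ) = stairc m := by
  apply Finset.prod_congr rfl
  intro i _
  congr 1
  simp only [Ee]
  rcases Nat.lt_trichotomy (i:ℕ) m with h | h | h
  · rw [if_pos h]
  · rw [if_neg (by omega), if_pos h]; omega
  · rw [if_neg (by omega), if_neg (by omega)]; omega

lemma blk_stairc (hD : IsDDiff D) (m : ℕ) (hm : m < n) :
    blk D 0 m (stairc (m+1)) = stairc m := by
  have key : ∀ j, j ≤ m → blk D 0 j (stairc (m+1)) = Vv m j := by
    intro j
    induction j with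
    | zero => intro _; exact (Vv_zero m).symm
    | succ j ih =>
      intro hj
      rw [blk_succ, Nat.zero_add, ih (by omega), stair_step D hD m j (by omega) (by omega)]
  rw [key m le_rfl, Vv_last]

lemma bcF_stairc (hD : IsDDiff D) : ∀ (c t : ℕ), t + c + 1 ≤ n →
    bcF D t c (stairc (t + c + 1)) = stairc (t+1) := by
  intro c
  induction c with
  | zero => intro t _; rfl
  | succ c ih =>
    intro t hn'
    rw [bcF_succ, show t + (c+1) + 1 = (t+1) + c + 1 by omega, ih (t+1) (by omega)]
    exact blk_stairc D hD (t+1) (by omega)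

lemma stairc_one : (stairc 1 : MvPolynomial (Fin n) ℤ) = 1 := by
  simp [stairc]
end DDaux

/-- the operator e_n(f) = x_1^{n-1}⋯x_{n-1}·∂(n)(f) is an idempotent. -/
theorem en_idem {n : ℕ} (hn : 1 ≤ n)
    (D : ℕ → MvPolynomial (Fin n) ℤ →ₗ[ℤ] MvPolynomial (Fin n) ℤ) (hD : IsDDiff D) :
    ∀ f : MvPolynomial (Fin n) ℤ,
      staircase n * longOp D (staircase n * longOp D f) = staircase n * longOp D f := by
  intro f
  have hword : longOp D = DDaux.bcF D 0 (n-1) := by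
    show DDaux.Fop D (nilWord n) = _
    rw [show nilWord n = (List.range' 0 (n-1)).flatMap (fun s => (List.range (s+1)).reverse) by
        rw [nilWord, List.range_eq_range']]
    exact DDaux.Fop_flatMap D (n-1) 0
  have hmem : ∀ k ∈ nilWord n, k + 1 < n := by
    intro k hk
    simp only [nilWord, List.mem_flatMap, List.mem_reverse, List.mem_range] at hk
    omega
  have hsym : ∀ (k : ℕ) (hk : k + 1 < n),
      rename (DDaux.sk k hk) (longOp D f) = longOp D f := by
    intro k hk
    have hz : D k (longOp D f) = 0 := by
      rw [hword]
      exact DDaux.D_bcF D hD k 0 (n-1) hk (Nat.zero_le k) (by omega) (by omega) f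
    have h := hD k hk (longOp D f)
    rw [hz, mul_zero] at h
    exact (sub_eq_zero.mp h.symm).symm
  have hleib : longOp D (staircase n * longOp D f) = longOp D (staircase n) * longOp D f :=
    DDaux.Fop_mul D hD (nilWord n) hmem (longOp D f) (staircase n) hsym
  have hstair : longOp D (staircase n) = 1 := by
    rw [hword]
    have h2 := DDaux.bcF_stairc D hD (n-1) 0 (by omega)
    rw [show 0 + (n-1) + 1 = n by omega] at h2
    have hsn : staircase n = DDaux.stairc n := rfl
    rw [hsn, h2]
    exact DDaux.stairc_one
  rw [hleib, hstair, one_mul]
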